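/- There exist a complex Hilbert space H and three pairwise commuting contractions T₁, T₂, T₃ ∈ B(H) with the following property. For n = (n₁, n₂, n₃) ∈ ℕ³ define Θ_n : B(H) → B(H) by Θ_n(a) = T₁^{n₁} T₂^{n₂} T₃^{n₃} a (T₃^{n₃})* (T₂^{n₂})* (T₁^{n₁})*. Then there is no triple (K, u, α) consisting of a complex Hilbert space K, an isometry u : H → K, and a family α = (α_n)_{n ∈ ℕ³} of *-homomorphisms α_n : B(K) → B(K) with α_0 = id and α_{m+n} = α_m ∘ α_n for all m, n ∈ ℕ³, each α_n normal (i.e. whenever a bounded net (a_j) converges to a in the weak operator topology, α_n(a_j) → α_n(a) in the weak operator topology), satisfying Θ_n(u* a u) = u* α_n(a) u for every n ∈ ℕ³ and every a ∈ B(K). -/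

import Mathlib

open scoped InnerProductSpace
open ContinuousLinearMap

set_option linter.unusedSectionVars false

universe u

noncomputable section


lemma swap_left {M : Type*} [Monoid M] {x y : M} (h : Commute x y) (w : M) :
    x * (y * w) = y * (x * w) := by
  rw [← mul_assoc, h.eq, mul_assoc]

lemma shuffle {M : Type*} [Monoid M] {a b c : M} (hab : Commute a b) (hac : Commute a c)
    (hbc : Commute b c) (p q r s t v : ℕ) :
    a ^ (p + s) * b ^ (q + t) * c ^ (r + v) = a ^ p * b ^ q * c ^ r * (a ^ s * b ^ t * c ^ v) := by
  have h1 : Commute (c ^ r) (a ^ s) := (hac.symm).pow_pow r s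
  have h2 : Commute (b ^ q) (a ^ s) := (hab.symm).pow_pow q s
  have h3 : Commute (c ^ r) (b ^ t) := (hbc.symm).pow_pow r t
  simp only [pow_add, mul_assoc]
  rw [swap_left h1, swap_left h2, swap_left h3]





namespace Stmt5Aux

variable {H : Type} [NormedAddCommGroup H] [InnerProductSpace ℂ H] [CompleteSpace H]
variable {K : Type*} [NormedAddCommGroup K] [InnerProductSpace ℂ K] [CompleteSpace K]

def rk (x y : K) : K →L[ℂ] K := (innerSL ℂ y).smulRight x

lemma rk_apply (x y ζ : K) : rk x y ζ = ⟪y, ζ⟫_ℂ • x := rfl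

lemma comp_rk (a : K →L[ℂ] K) (x y : K) : a * rk x y = rk (a x) y := by
  ext ζ; simp [rk_apply, map_smul, ContinuousLinearMap.mul_apply]

lemma rk_mul_rk (x y x' y' : K) : rk x y * rk x' y' = ⟪y, x'⟫_ℂ • rk x y' := by
  ext ζ
  simp only [ContinuousLinearMap.mul_apply, rk_apply, ContinuousLinearMap.smul_apply,
    inner_smul_right, smul_smul]
  ring_nf

lemma star_rk (x y : K) : star (rk x y) = rk y x := by
  rw [star_eq_adjoint]
  ext ζ
  apply ext_inner_left ℂ
  intro v
  rw [adjoint_inner_right]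
  simp only [rk_apply, inner_smul_left, inner_smul_right]
  rw [← inner_conj_symm v y]
  ring

lemma adj_u_apply (u : H →ₗᵢ[ℂ] K) (ξ : K) (h : H) :
    ⟪ContinuousLinearMap.adjoint u.toContinuousLinearMap ξ, h⟫_ℂ = ⟪ξ, u h⟫_ℂ := by
  rw [adjoint_inner_left]; simp

lemma u_adj_apply (u : H →ₗᵢ[ℂ] K) (ξ : K) (h : H) :
    ⟪h, ContinuousLinearMap.adjoint u.toContinuousLinearMap ξ⟫_ℂ = ⟪u h, ξ⟫_ℂ := by
  rw [adjoint_inner_right]; simp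

lemma adj_u_u (u : H →ₗᵢ[ℂ] K) (h : H) :
    ContinuousLinearMap.adjoint u.toContinuousLinearMap (u h) = h := by
  apply ext_inner_right ℂ
  intro v
  rw [adj_u_apply u (u h) v, u.inner_map_map]

/-- The four properties characterizing the canonical intertwining isometry. -/
def props (u : H →ₗᵢ[ℂ] K) (β : (K →L[ℂ] K) → (K →L[ℂ] K)) (S : H →L[ℂ] H)
    (V : K →L[ℂ] K) : Prop :=
  (∀ ζ ζ', ⟪V ζ, V ζ'⟫_ℂ = ⟪ζ, ζ'⟫_ℂ) ∧
  (∀ ζ h, ⟪V ζ, u h⟫_ℂ = ⟪ζ, u (star S h)⟫_ℂ) ∧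
  (∀ a, β a * V = V * a) ∧
  (β 1 * V = V)

section Core

variable (u : H →ₗᵢ[ℂ] K) (β : (K →L[ℂ] K) → (K →L[ℂ] K)) (S : H →L[ℂ] H)
variable (hmul : ∀ a b, β (a * b) = β a * β b)
variable (hstar : ∀ a, β (star a) = star (β a))
variable (hadd : ∀ a b, β (a + b) = β a + β b)
variable (hcov : ∀ a : K →L[ℂ] K,
    S * ((ContinuousLinearMap.adjoint u.toContinuousLinearMap).comp
      (a.comp u.toContinuousLinearMap)) * star S =
    (ContinuousLinearMap.adjoint u.toContinuousLinearMap).comp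
      ((β a).comp u.toContinuousLinearMap))

include hcov in
lemma cov_pt (a : K →L[ℂ] K) (h : H) :
    S (ContinuousLinearMap.adjoint u.toContinuousLinearMap (a (u (star S h)))) =
    ContinuousLinearMap.adjoint u.toContinuousLinearMap (β a (u h)) := by
  have := congrArg (fun Z : H →L[ℂ] H => Z h) (hcov a)
  simpa [ContinuousLinearMap.mul_apply, ContinuousLinearMap.comp_apply] using this

include hmul hstar hadd hcov in
lemma exists_V (h₀ : H) (hne : star S h₀ ≠ 0) : ∃ V, props u β S V := by
  set c : ℝ := ‖star S h₀‖ ^ 2 with hc_def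
  have hc : (0:ℝ) < c := by rw [hc_def]; exact pow_pos (norm_pos_iff.mpr hne) 2
  have hcC : ((c:ℂ)) ≠ 0 := by exact_mod_cast hc.ne'
  set ξ₀ : K := u (star S h₀) with hxi
  set η₀ : K := u h₀ with heta
  have hxi_inner : ⟪ξ₀, ξ₀⟫_ℂ = (c : ℂ) := by
    rw [hxi, u.inner_map_map, inner_self_eq_norm_sq_to_K]
    norm_cast
  set raw : K → K := fun ζ => ((c:ℂ))⁻¹ • β (rk ζ ξ₀) η₀ with hraw
  -- the fundamental inner product identity
  have hkey : ∀ ζ ζ', ⟪raw ζ, raw ζ'⟫_ℂ = ⟪ζ, ζ'⟫_ℂ := by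
    intro ζ ζ'
    have e1 : ⟪β (rk ζ ξ₀) η₀, β (rk ζ' ξ₀) η₀⟫_ℂ
        = ⟪η₀, β (star (rk ζ ξ₀) * rk ζ' ξ₀) η₀⟫_ℂ := by
      calc ⟪β (rk ζ ξ₀) η₀, β (rk ζ' ξ₀) η₀⟫_ℂ
          = ⟪η₀, ContinuousLinearMap.adjoint (β (rk ζ ξ₀)) (β (rk ζ' ξ₀) η₀)⟫_ℂ :=
            (adjoint_inner_right _ _ _).symm
        _ = ⟪η₀, (β (star (rk ζ ξ₀)) * β (rk ζ' ξ₀)) η₀⟫_ℂ := by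
            rw [← star_eq_adjoint, ← hstar, ContinuousLinearMap.mul_apply]
        _ = ⟪η₀, β (star (rk ζ ξ₀) * rk ζ' ξ₀) η₀⟫_ℂ := by rw [← hmul]
    have e2 : star (rk ζ ξ₀) * rk ζ' ξ₀ = ⟪ζ, ζ'⟫_ℂ • rk ξ₀ ξ₀ := by
      rw [star_rk, rk_mul_rk]
    have e3 : (⟪ζ, ζ'⟫_ℂ • rk ξ₀ ξ₀ : K →L[ℂ] K) (u (star S h₀)) = (⟪ζ, ζ'⟫_ℂ * c) • ξ₀ := by
      rw [← hxi]
      simp only [ContinuousLinearMap.smul_apply, rk_apply, hxi_inner, smul_smul]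
    have e4 : ⟪η₀, β (⟪ζ, ζ'⟫_ℂ • rk ξ₀ ξ₀) η₀⟫_ℂ = ⟪ζ, ζ'⟫_ℂ * c * c := by
      rw [heta, ← u_adj_apply u, ← cov_pt u β S hcov _ h₀, e3]
      simp only [map_smul, adj_u_u u, inner_smul_right]
      have : ⟪h₀, S (star S h₀)⟫_ℂ = (c:ℂ) := by
        rw [star_eq_adjoint, ← adjoint_inner_left, ← star_eq_adjoint,
          inner_self_eq_norm_sq_to_K]
        norm_cast
      rw [hxi, adj_u_u u, this]
    rw [hraw]
    simp only [inner_smul_left, inner_smul_right, map_inv₀, Complex.conj_ofReal]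
    rw [e1, e2, e4]
    field_simp
  -- additivity of raw
  have hadd' : ∀ ζ ζ', raw (ζ + ζ') = raw ζ + raw ζ' := by
    intro ζ ζ'
    have hrk : rk (ζ + ζ') ξ₀ = rk ζ ξ₀ + rk ζ' ξ₀ := by
      ext w
      simp [rk_apply, smul_add]
    show ((c:ℂ))⁻¹ • β (rk (ζ + ζ') ξ₀) η₀
      = ((c:ℂ))⁻¹ • β (rk ζ ξ₀) η₀ + ((c:ℂ))⁻¹ • β (rk ζ' ξ₀) η₀
    rw [hrk, hadd, ContinuousLinearMap.add_apply, smul_add]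
  -- homogeneity of raw
  have hsmul' : ∀ (μ : ℂ) ζ, raw (μ • ζ) = μ • raw ζ := by
    intro μ ζ
    have hz : ⟪raw (μ • ζ) - μ • raw ζ, raw (μ • ζ) - μ • raw ζ⟫_ℂ = 0 := by
      simp only [inner_sub_left, inner_sub_right, inner_smul_left, inner_smul_right, hkey]
      ring
    rw [inner_self_eq_zero, sub_eq_zero] at hz
    exact hz
  have hnorm' : ∀ ζ, ‖raw ζ‖ = ‖ζ‖ := by
    intro ζ
    have h2 := hkey ζ ζ
    rw [inner_self_eq_norm_sq_to_K, inner_self_eq_norm_sq_to_K] at h2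
    have h3 : ‖raw ζ‖ ^ 2 = ‖ζ‖ ^ 2 := by exact_mod_cast h2
    calc ‖raw ζ‖ = Real.sqrt (‖raw ζ‖ ^ 2) := (Real.sqrt_sq (norm_nonneg _)).symm
      _ = Real.sqrt (‖ζ‖ ^ 2) := by rw [h3]
      _ = ‖ζ‖ := Real.sqrt_sq (norm_nonneg _)
  let Vlin : K →ₗ[ℂ] K :=
    { toFun := raw, map_add' := hadd', map_smul' := hsmul' }
  have hVlin : ∀ ζ, Vlin ζ = raw ζ := fun _ => rfl
  let V : K →L[ℂ] K := Vlin.mkContinuous 1 (fun ζ => by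
    rw [hVlin, hnorm', one_mul])
  have hVapp : ∀ ζ, V ζ = raw ζ := fun _ => rfl
  refine ⟨V, ?_, ?_, ?_, ?_⟩
  · intro ζ ζ'
    rw [hVapp, hVapp]
    exact hkey ζ ζ'
  · -- ⟪V ζ, u h⟫ = ⟪ζ, u (star S h)⟫
    intro ζ h
    rw [hVapp]
    show ⟪((c:ℂ))⁻¹ • β (rk ζ ξ₀) η₀, u h⟫_ℂ = _
    rw [inner_smul_left, ← adj_u_apply u (β (rk ζ ξ₀) η₀) h]
    rw [heta, ← cov_pt u β S hcov _ h₀]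
    have e5 : rk ζ ξ₀ (u (star S h₀)) = (c:ℂ) • ζ := by
      rw [← hxi, rk_apply, hxi_inner]
    rw [e5, map_smul, map_smul, inner_smul_left]
    rw [← adjoint_inner_right S, ← star_eq_adjoint,
      adj_u_apply u ζ (star S h)]
    simp only [map_inv₀, Complex.conj_ofReal]
    field_simp
  · -- intertwining
    intro a
    ext ζ
    rw [ContinuousLinearMap.mul_apply, ContinuousLinearMap.mul_apply, hVapp, hVapp]
    show β a (((c:ℂ))⁻¹ • β (rk ζ ξ₀) η₀) = ((c:ℂ))⁻¹ • β (rk (a ζ) ξ₀) η₀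
    rw [map_smul, ← ContinuousLinearMap.mul_apply (β a) (β (rk ζ ξ₀)), ← hmul, comp_rk]
  · -- unitality
    ext ζ
    rw [ContinuousLinearMap.mul_apply, hVapp]
    show β 1 (((c:ℂ))⁻¹ • β (rk ζ ξ₀) η₀) = ((c:ℂ))⁻¹ • β (rk ζ ξ₀) η₀
    rw [map_smul, ← ContinuousLinearMap.mul_apply (β 1) (β (rk ζ ξ₀)), ← hmul, one_mul]

/-- helper: equal self inner products give equal norms -/
lemma norm_eq_of_inner_self {E F : Type*} [NormedAddCommGroup E] [InnerProductSpace ℂ E]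
    [NormedAddCommGroup F] [InnerProductSpace ℂ F] {x : E} {y : F}
    (h : ⟪x, x⟫_ℂ = ⟪y, y⟫_ℂ) : ‖x‖ = ‖y‖ := by
  rw [inner_self_eq_norm_sq_to_K, inner_self_eq_norm_sq_to_K] at h
  have h3 : ‖x‖ ^ 2 = ‖y‖ ^ 2 := by exact_mod_cast h
  calc ‖x‖ = Real.sqrt (‖x‖ ^ 2) := (Real.sqrt_sq (norm_nonneg _)).symm
    _ = Real.sqrt (‖y‖ ^ 2) := by rw [h3]
    _ = ‖y‖ := Real.sqrt_sq (norm_nonneg _)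

include hmul hstar hcov in
lemma props_unique (h₀ h₁ : H) (hne : star S h₀ ≠ 0) (hh₁ : ‖h₁‖ = 1)
    (V t : K →L[ℂ] K) (hV : props u β S V) (ht : props u β S t) : t = V := by
  obtain ⟨hV1, hV2, hV3, hV4⟩ := hV
  obtain ⟨ht1, ht2, ht3, ht4⟩ := ht
  have hb1sa : star (β 1) = β 1 := by rw [← hstar, star_one]
  have hb1proj : β 1 * β 1 = β 1 := by rw [← hmul, one_mul]
  have hVstar : ∀ a : K →L[ℂ] K, star V * β a = a * star V := by
    intro a
    have h3 := congrArg star (hV3 (star a))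
    rw [star_mul, star_mul, star_star] at h3
    rw [← hstar (star a), star_star] at h3
    exact h3
  set x : K →L[ℂ] K := star V * t with hx
  have hcomm : ∀ a : K →L[ℂ] K, x * a = a * x := by
    intro a
    calc (star V * t) * a = star V * (t * a) := mul_assoc _ _ _
      _ = star V * (β a * t) := by rw [← ht3]
      _ = (star V * β a) * t := (mul_assoc _ _ _).symm
      _ = (a * star V) * t := by rw [hVstar]
      _ = a * (star V * t) := mul_assoc _ _ _
  have hη : ⟪u h₁, u h₁⟫_ℂ = 1 := by
    rw [u.inner_map_map, inner_self_eq_norm_sq_to_K, hh₁]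
    norm_num
  set lam : ℂ := ⟪u h₁, x (u h₁)⟫_ℂ with hlam_def
  have hxval : ∀ ζ, x ζ = lam • ζ := by
    intro ζ
    have h5 := congrArg (fun Z : K →L[ℂ] K => Z (u h₁)) (hcomm (rk ζ (u h₁)))
    simp only [ContinuousLinearMap.mul_apply, rk_apply] at h5
    rw [hη, one_smul] at h5
    exact h5
  have hproj : ∀ a b : K, ⟪β 1 a, β 1 b⟫_ℂ = ⟪a, β 1 b⟫_ℂ := by
    intro a b
    calc ⟪β 1 a, β 1 b⟫_ℂ
        = ⟪a, ContinuousLinearMap.adjoint (β 1) (β 1 b)⟫_ℂ := (adjoint_inner_right _ _ _).symm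
      _ = ⟪a, β 1 b⟫_ℂ := by
          rw [← star_eq_adjoint, hb1sa, ← ContinuousLinearMap.mul_apply, hb1proj]
  have hsa : ∀ (w v : K), ⟪β 1 w, v⟫_ℂ = ⟪w, β 1 v⟫_ℂ := by
    intro w v
    rw [← adjoint_inner_right (β 1) w v, ← star_eq_adjoint, hb1sa]
  have hβ1V : ∀ ξ : K, β 1 (V ξ) = V ξ := by
    intro ξ
    have := congrArg (fun Z : K →L[ℂ] K => Z ξ) hV4
    simpa [ContinuousLinearMap.mul_apply] using this
  have hβ1t : ∀ ξ : K, β 1 (t ξ) = t ξ := by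
    intro ξ
    have := congrArg (fun Z : K →L[ℂ] K => Z ξ) ht4
    simpa [ContinuousLinearMap.mul_apply] using this
  -- (H1): β 1 (u h) = V (u (star S h))
  have hH1 : ∀ h : H, β 1 (u h) = V (u (star S h)) := by
    intro h
    have hcpt := cov_pt u β S hcov 1 h
    simp only [ContinuousLinearMap.one_apply] at hcpt
    have hA : ⟪β 1 (u h), β 1 (u h)⟫_ℂ = ⟪star S h, star S h⟫_ℂ := by
      rw [hproj, ← u_adj_apply u, ← hcpt, adj_u_u u]
      rw [star_eq_adjoint, ← adjoint_inner_left, ← star_eq_adjoint]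
    have hB : ⟪β 1 (u h), V (u (star S h))⟫_ℂ = ⟪star S h, star S h⟫_ℂ := by
      rw [← hβ1V (u (star S h)), hproj, hβ1V, ← inner_conj_symm, hV2,
        u.inner_map_map, inner_conj_symm]
    have hD : ⟪V (u (star S h)), V (u (star S h))⟫_ℂ = ⟪star S h, star S h⟫_ℂ := by
      rw [hV1, u.inner_map_map]
    have hC : ⟪V (u (star S h)), β 1 (u h)⟫_ℂ = ⟪star S h, star S h⟫_ℂ := by
      rw [← inner_conj_symm, hB, inner_conj_symm]
    have hz : ⟪β 1 (u h) - V (u (star S h)), β 1 (u h) - V (u (star S h))⟫_ℂ = 0 := by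
      rw [inner_sub_left, inner_sub_right, inner_sub_right, hA, hB, hC, hD]
      ring
    rw [inner_self_eq_zero, sub_eq_zero] at hz
    exact hz
  -- pin the scalar
  have hpin : ∀ (ζ : K) (h : H),
      ⟪ζ, u (star S h)⟫_ℂ = (starRingEnd ℂ) lam * ⟪ζ, u (star S h)⟫_ℂ := by
    intro ζ h
    have e6 : ⟪t ζ, u h⟫_ℂ = (starRingEnd ℂ) lam * ⟪ζ, u (star S h)⟫_ℂ := by
      rw [← hβ1t ζ, hsa, hH1 h]
      rw [← adjoint_inner_left V, ← star_eq_adjoint, ← ContinuousLinearMap.mul_apply, ← hx,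
        hxval, inner_smul_left]
    rw [← e6, ht2]
  have hlam1 : lam = 1 := by
    have h7 := hpin (u (star S h₀)) h₀
    rw [u.inner_map_map] at h7
    have h8 : ⟪star S h₀, star S h₀⟫_ℂ ≠ 0 := by
      rw [inner_self_ne_zero]
      exact hne
    have h9 : (starRingEnd ℂ) lam = 1 := by
      have h10 : ((starRingEnd ℂ) lam - 1) * ⟪star S h₀, star S h₀⟫_ℂ = 0 := by
        rw [sub_mul, one_mul, ← h7]
        ring
      rcases mul_eq_zero.mp h10 with h11 | h11
      · have := sub_eq_zero.mp h11
        exact this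
      · exact absurd h11 h8
    calc lam = (starRingEnd ℂ) ((starRingEnd ℂ) lam) := (Complex.conj_conj lam).symm
      _ = 1 := by rw [h9]; norm_num
  -- conclude t = V
  ext ζ
  have hVt : ⟪V ζ, t ζ⟫_ℂ = ⟪ζ, ζ⟫_ℂ := by
    rw [← adjoint_inner_right V, ← star_eq_adjoint, ← ContinuousLinearMap.mul_apply, ← hx,
      hxval, hlam1, one_smul]
  have htV : ⟪t ζ, V ζ⟫_ℂ = ⟪ζ, ζ⟫_ℂ := by
    rw [← inner_conj_symm, hVt, inner_conj_symm]
  have hz : ⟪t ζ - V ζ, t ζ - V ζ⟫_ℂ = 0 := by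
    rw [inner_sub_left, inner_sub_right, inner_sub_right, ht1, htV, hVt, hV1]
    ring
  rw [inner_self_eq_zero, sub_eq_zero] at hz
  exact hz

end Core

section Comp

variable (u : H →ₗᵢ[ℂ] K)

lemma props_comp (β₁ β₂ β₁₂ : (K →L[ℂ] K) → (K →L[ℂ] K)) (S₁ S₂ S₁₂ : H →L[ℂ] H)
    (V₁ V₂ : K →L[ℂ] K) (hV₁ : props u β₁ S₁ V₁) (hV₂ : props u β₂ S₂ V₂)
    (hβ : ∀ a, β₁₂ a = β₁ (β₂ a)) (hS : S₁₂ = S₁ * S₂) :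
    props u β₁₂ S₁₂ (V₁ * V₂) := by
  obtain ⟨h11, h12, h13, h14⟩ := hV₁
  obtain ⟨h21, h22, h23, h24⟩ := hV₂
  refine ⟨?_, ?_, ?_, ?_⟩
  · intro ζ ζ'
    rw [ContinuousLinearMap.mul_apply, ContinuousLinearMap.mul_apply, h11, h21]
  · intro ζ h
    rw [ContinuousLinearMap.mul_apply, h12, h22, hS, star_mul,
      ContinuousLinearMap.mul_apply]
  · intro a
    rw [hβ]
    calc β₁ (β₂ a) * (V₁ * V₂) = (β₁ (β₂ a) * V₁) * V₂ := (mul_assoc _ _ _).symm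
      _ = (V₁ * β₂ a) * V₂ := by rw [h13]
      _ = V₁ * (β₂ a * V₂) := mul_assoc _ _ _
      _ = V₁ * (V₂ * a) := by rw [h23]
      _ = (V₁ * V₂) * a := (mul_assoc _ _ _).symm
  · rw [hβ]
    calc β₁ (β₂ 1) * (V₁ * V₂) = (β₁ (β₂ 1) * V₁) * V₂ := (mul_assoc _ _ _).symm
      _ = (V₁ * β₂ 1) * V₂ := by rw [h13]
      _ = V₁ * (β₂ 1 * V₂) := mul_assoc _ _ _
      _ = V₁ * V₂ := by rw [h24]

lemma props_forward (β : (K →L[ℂ] K) → (K →L[ℂ] K)) (S : H →L[ℂ] H) (V : K →L[ℂ] K)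
    (hV : props u β S V) (h : H) (hnorm : ‖S h‖ = ‖h‖) :
    V (u h) = u (S h) := by
  obtain ⟨hV1, hV2, hV3, hV4⟩ := hV
  have hadj : ContinuousLinearMap.adjoint u.toContinuousLinearMap (V (u h)) = S h := by
    apply ext_inner_left ℂ
    intro v
    rw [u_adj_apply u, ← inner_conj_symm, hV2, u.inner_map_map, inner_conj_symm]
    rw [star_eq_adjoint, ← adjoint_inner_left]
  have h1 : ⟪V (u h), u (S h)⟫_ℂ = ⟪S h, S h⟫_ℂ := by
    rw [← adj_u_apply u (V (u h)) (S h), hadj]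
  have h2 : ⟪u (S h), V (u h)⟫_ℂ = ⟪S h, S h⟫_ℂ := by
    rw [← inner_conj_symm, h1, inner_conj_symm]
  have hz : ⟪V (u h) - u (S h), V (u h) - u (S h)⟫_ℂ = 0 := by
    rw [inner_sub_left, inner_sub_right, inner_sub_right, hV1, h1, h2,
      u.inner_map_map, u.inner_map_map]
    have : ⟪h, h⟫_ℂ = ⟪S h, S h⟫_ℂ := by
      rw [inner_self_eq_norm_sq_to_K, inner_self_eq_norm_sq_to_K, hnorm]
    rw [this]
    ring
  rw [inner_self_eq_zero, sub_eq_zero] at hz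
  exact hz

lemma props_injective (β : (K →L[ℂ] K) → (K →L[ℂ] K)) (S : H →L[ℂ] H) (V : K →L[ℂ] K)
    (hV : props u β S V) : Function.Injective V := by
  intro a b hab
  have h1 := hV.1 (a - b) (a - b)
  rw [map_sub, hab, sub_self] at h1
  rw [inner_zero_left] at h1
  rw [eq_comm, inner_self_eq_zero, sub_eq_zero] at h1
  exact h1

end Comp

end Stmt5Aux





namespace Stmt5Conc

abbrev Hc : Type := EuclideanSpace ℂ (Fin 5)

def M1 : Matrix (Fin 5) (Fin 5) ℂ :=
  !![0,0,0,0,0; 0,0,0,0,0; 1,0,0,0,0; 0,1,0,0,0; 0,0,0,0,1]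
def M2 : Matrix (Fin 5) (Fin 5) ℂ :=
  !![0,0,0,0,0; 0,0,0,0,0; 1,0,0,0,0; 0,-1,0,0,0; 0,0,0,0,1]
def M3 : Matrix (Fin 5) (Fin 5) ℂ :=
  !![0,0,0,0,0; 0,0,0,0,0; 0,1,0,0,0; 1,0,0,0,0; 0,0,0,0,1]
def D5 : Matrix (Fin 5) (Fin 5) ℂ :=
  !![0,0,0,0,0; 0,0,0,0,0; 0,0,0,0,0; 0,0,0,0,0; 0,0,0,0,1]

def T1 : Hc →L[ℂ] Hc := Matrix.toEuclideanCLM (𝕜 := ℂ) M1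
def T2 : Hc →L[ℂ] Hc := Matrix.toEuclideanCLM (𝕜 := ℂ) M2
def T3 : Hc →L[ℂ] Hc := Matrix.toEuclideanCLM (𝕜 := ℂ) M3

lemma toCLM_apply (M : Matrix (Fin 5) (Fin 5) ℂ) (x : Hc) (i : Fin 5) :
    (Matrix.toEuclideanCLM (𝕜 := ℂ) M) x i = (M.mulVec x) i := by
  simp [Matrix.toEuclideanCLM, Matrix.toEuclideanLin, Matrix.toLin_eq_toLin',
    Matrix.toLin'_apply]
  rfl

lemma M1_mulVec (x : Fin 5 → ℂ) : M1.mulVec x = ![0, 0, x 0, x 1, x 4] := by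
  funext i
  fin_cases i <;>
    simp [M1, Matrix.mulVec, dotProduct, Fin.sum_univ_five, Matrix.vecHead,
      Matrix.vecTail]

lemma M2_mulVec (x : Fin 5 → ℂ) : M2.mulVec x = ![0, 0, x 0, -x 1, x 4] := by
  funext i
  fin_cases i <;>
    simp [M2, Matrix.mulVec, dotProduct, Fin.sum_univ_five, Matrix.vecHead,
      Matrix.vecTail]

lemma M3_mulVec (x : Fin 5 → ℂ) : M3.mulVec x = ![0, 0, x 1, x 0, x 4] := by
  funext i
  fin_cases i <;>
    simp [M3, Matrix.mulVec, dotProduct, Fin.sum_univ_five, Matrix.vecHead,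
      Matrix.vecTail]

lemma T1_apply (x : Hc) (i : Fin 5) : T1 x i = ![0, 0, x 0, x 1, x 4] i := by
  rw [T1, toCLM_apply, M1_mulVec]
lemma T2_apply (x : Hc) (i : Fin 5) : T2 x i = ![0, 0, x 0, -x 1, x 4] i := by
  rw [T2, toCLM_apply, M2_mulVec]
lemma T3_apply (x : Hc) (i : Fin 5) : T3 x i = ![0, 0, x 1, x 0, x 4] i := by
  rw [T3, toCLM_apply, M3_mulVec]

-- pairwise products of the matrices all equal D5
lemma M1_mul_M2 : M1 * M2 = D5 := by
  ext i j
  fin_cases i <;> fin_cases j <;>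
    simp [M1, M2, D5, Matrix.mul_apply, Fin.sum_univ_five, Matrix.vecHead, Matrix.vecTail]
lemma M2_mul_M1 : M2 * M1 = D5 := by
  ext i j
  fin_cases i <;> fin_cases j <;>
    simp [M1, M2, D5, Matrix.mul_apply, Fin.sum_univ_five, Matrix.vecHead, Matrix.vecTail]
lemma M1_mul_M3 : M1 * M3 = D5 := by
  ext i j
  fin_cases i <;> fin_cases j <;>
    simp [M1, M3, D5, Matrix.mul_apply, Fin.sum_univ_five, Matrix.vecHead, Matrix.vecTail]
lemma M3_mul_M1 : M3 * M1 = D5 := by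
  ext i j
  fin_cases i <;> fin_cases j <;>
    simp [M1, M3, D5, Matrix.mul_apply, Fin.sum_univ_five, Matrix.vecHead, Matrix.vecTail]
lemma M2_mul_M3 : M2 * M3 = D5 := by
  ext i j
  fin_cases i <;> fin_cases j <;>
    simp [M2, M3, D5, Matrix.mul_apply, Fin.sum_univ_five, Matrix.vecHead, Matrix.vecTail]
lemma M3_mul_M2 : M3 * M2 = D5 := by
  ext i j
  fin_cases i <;> fin_cases j <;>
    simp [M2, M3, D5, Matrix.mul_apply, Fin.sum_univ_five, Matrix.vecHead, Matrix.vecTail]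

lemma commute_T1_T2 : Commute T1 T2 := by
  show T1 * T2 = T2 * T1
  rw [T1, T2, ← map_mul, ← map_mul, M1_mul_M2, M2_mul_M1]
lemma commute_T1_T3 : Commute T1 T3 := by
  show T1 * T3 = T3 * T1
  rw [T1, T3, ← map_mul, ← map_mul, M1_mul_M3, M3_mul_M1]
lemma commute_T2_T3 : Commute T2 T3 := by
  show T2 * T3 = T3 * T2
  rw [T2, T3, ← map_mul, ← map_mul, M2_mul_M3, M3_mul_M2]

lemma norm_T1_le : ‖T1‖ ≤ 1 := by
  apply ContinuousLinearMap.opNorm_le_bound _ zero_le_one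
  intro x
  rw [one_mul, EuclideanSpace.norm_eq, EuclideanSpace.norm_eq]
  apply Real.sqrt_le_sqrt
  rw [Fin.sum_univ_five, Fin.sum_univ_five]
  simp only [T1_apply]
  simp only [Matrix.cons_val_zero, Matrix.cons_val_one, Matrix.head_cons, Matrix.vecHead,
    Matrix.vecTail, Matrix.cons_val_two, Matrix.cons_val_three, Matrix.cons_val_four,
    Function.comp_apply, Fin.succ]
  norm_num
  nlinarith [sq_nonneg ‖x 2‖, sq_nonneg ‖x 3‖, norm_nonneg (x 2), norm_nonneg (x 3)]

lemma norm_T2_le : ‖T2‖ ≤ 1 := by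
  apply ContinuousLinearMap.opNorm_le_bound _ zero_le_one
  intro x
  rw [one_mul, EuclideanSpace.norm_eq, EuclideanSpace.norm_eq]
  apply Real.sqrt_le_sqrt
  rw [Fin.sum_univ_five, Fin.sum_univ_five]
  simp only [T2_apply]
  simp only [Matrix.cons_val_zero, Matrix.cons_val_one, Matrix.head_cons, Matrix.vecHead,
    Matrix.vecTail, Matrix.cons_val_two, Matrix.cons_val_three, Matrix.cons_val_four,
    Function.comp_apply, Fin.succ]
  norm_num
  nlinarith [sq_nonneg ‖x 2‖, sq_nonneg ‖x 3‖, norm_nonneg (x 2), norm_nonneg (x 3)]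

lemma norm_T3_le : ‖T3‖ ≤ 1 := by
  apply ContinuousLinearMap.opNorm_le_bound _ zero_le_one
  intro x
  rw [one_mul, EuclideanSpace.norm_eq, EuclideanSpace.norm_eq]
  apply Real.sqrt_le_sqrt
  rw [Fin.sum_univ_five, Fin.sum_univ_five]
  simp only [T3_apply]
  simp only [Matrix.cons_val_zero, Matrix.cons_val_one, Matrix.head_cons, Matrix.vecHead,
    Matrix.vecTail, Matrix.cons_val_two, Matrix.cons_val_three, Matrix.cons_val_four,
    Function.comp_apply, Fin.succ]
  norm_num
  nlinarith [sq_nonneg ‖x 2‖, sq_nonneg ‖x 3‖, norm_nonneg (x 2), norm_nonneg (x 3)]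

/-- concrete vectors -/
def vec5 (a b c d e : ℂ) : Hc := (WithLp.equiv 2 (Fin 5 → ℂ)).symm ![a, b, c, d, e]

lemma vec5_apply (a b c d e : ℂ) (i : Fin 5) : vec5 a b c d e i = ![a, b, c, d, e] i := rfl

lemma vec5_ext (x : Hc) (a b c d e : ℂ)
    (h0 : x 0 = a) (h1 : x 1 = b) (h2 : x 2 = c) (h3 : x 3 = d) (h4 : x 4 = e) :
    x = vec5 a b c d e := by
  apply (WithLp.equiv 2 (Fin 5 → ℂ)).injective
  funext i
  fin_cases i <;> simpa [vec5]

def E4 : Hc := vec5 0 0 0 0 1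
def vh10 : Hc := vec5 1 0 0 0 0
def vh01 : Hc := vec5 0 1 0 0 0
def vk10 : Hc := vec5 0 0 1 0 0
def vk01 : Hc := vec5 0 0 0 1 0
def vk0m1 : Hc := vec5 0 0 0 (-1) 0

lemma norm_vec5_single (j : Fin 5) (z : ℂ) (v : Hc) (hv : ∀ i, v i = if i = j then z else 0)
    (hz : ‖z‖ = 1) : ‖v‖ = 1 := by
  rw [EuclideanSpace.norm_eq, Fin.sum_univ_five]
  rw [hv 0, hv 1, hv 2, hv 3, hv 4]
  fin_cases j <;> simp [hz]

lemma norm_E4 : ‖E4‖ = 1 := by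
  apply norm_vec5_single 4 1
  · intro i; fin_cases i <;> simp [E4, vec5_apply]
  · simp
lemma norm_vh10 : ‖vh10‖ = 1 := by
  apply norm_vec5_single 0 1
  · intro i; fin_cases i <;> simp [vh10, vec5_apply]
  · simp
lemma norm_vh01 : ‖vh01‖ = 1 := by
  apply norm_vec5_single 1 1
  · intro i; fin_cases i <;> simp [vh01, vec5_apply]
  · simp
lemma norm_vk10 : ‖vk10‖ = 1 := by
  apply norm_vec5_single 2 1
  · intro i; fin_cases i <;> simp [vk10, vec5_apply]
  · simp
lemma norm_vk01 : ‖vk01‖ = 1 := by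
  apply norm_vec5_single 3 1
  · intro i; fin_cases i <;> simp [vk01, vec5_apply]
  · simp
lemma norm_vk0m1 : ‖vk0m1‖ = 1 := by
  apply norm_vec5_single 3 (-1)
  · intro i; fin_cases i <;> simp [vk0m1, vec5_apply]
  · simp

lemma T1_E4 : T1 E4 = E4 := by
  apply vec5_ext <;> simp [T1_apply, E4, vec5_apply]
lemma T2_E4 : T2 E4 = E4 := by
  apply vec5_ext <;> simp [T2_apply, E4, vec5_apply]
lemma T3_E4 : T3 E4 = E4 := by
  apply vec5_ext <;> simp [T3_apply, E4, vec5_apply]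

lemma T1_vh10 : T1 vh10 = vk10 := by
  apply vec5_ext <;> simp [T1_apply, vh10, vec5_apply]
lemma T1_vh01 : T1 vh01 = vk01 := by
  apply vec5_ext <;> simp [T1_apply, vh01, vec5_apply]
lemma T2_vh10 : T2 vh10 = vk10 := by
  apply vec5_ext <;> simp [T2_apply, vh10, vec5_apply]
lemma T2_vh01 : T2 vh01 = vk0m1 := by
  apply vec5_ext <;> simp [T2_apply, vh01, vec5_apply]
lemma T3_vh10 : T3 vh10 = vk01 := by
  apply vec5_ext <;> simp [T3_apply, vh10, vec5_apply]
lemma T3_vh01 : T3 vh01 = vk10 := by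
  apply vec5_ext <;> simp [T3_apply, vh01, vec5_apply]

lemma vk01_ne_vk0m1 : vk01 ≠ vk0m1 := by
  intro h
  have := congrArg (fun v : Hc => v 3) h
  simp only [vk01, vk0m1, vec5_apply] at this
  change (1:ℂ) = -1 at this
  norm_num at this

end Stmt5Conc


namespace Stmt5Conc

def Sn (n : ℕ × ℕ × ℕ) : Hc →L[ℂ] Hc := T1 ^ n.1 * T2 ^ n.2.1 * T3 ^ n.2.2

lemma Sn_def (n : ℕ × ℕ × ℕ) : Sn n = T1 ^ n.1 * T2 ^ n.2.1 * T3 ^ n.2.2 := rfl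

lemma pow_fix (T : Hc →L[ℂ] Hc) (h : T E4 = E4) : ∀ k : ℕ, (T ^ k) E4 = E4 := by
  intro k
  induction k with
  | zero => simp
  | succ k ih => rw [pow_succ, ContinuousLinearMap.mul_apply, h, ih]

lemma Sn_fix (n : ℕ × ℕ × ℕ) : Sn n E4 = E4 := by
  rw [Sn_def, ContinuousLinearMap.mul_apply, ContinuousLinearMap.mul_apply,
    pow_fix T3 T3_E4, pow_fix T2 T2_E4, pow_fix T1 T1_E4]

lemma Sn_star_ne (n : ℕ × ℕ × ℕ) : star (Sn n) E4 ≠ 0 := by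
  intro h0
  have h1 : ⟪star (Sn n) E4, E4⟫_ℂ = 0 := by rw [h0, inner_zero_left]
  rw [ContinuousLinearMap.star_eq_adjoint, ContinuousLinearMap.adjoint_inner_left, Sn_fix n,
    inner_self_eq_norm_sq_to_K, norm_E4] at h1
  norm_num at h1

lemma Sn_mul (m n : ℕ × ℕ × ℕ) : Sn (m + n) = Sn m * Sn n := by
  rw [Sn_def, Sn_def, Sn_def]
  show T1 ^ (m.1 + n.1) * T2 ^ (m.2.1 + n.2.1) * T3 ^ (m.2.2 + n.2.2) = _
  exact shuffle commute_T1_T2 commute_T1_T3 commute_T2_T3 _ _ _ _ _ _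

lemma Sn_e1 : Sn (1, 0, 0) = T1 := by
  rw [Sn_def]; simp
lemma Sn_e2 : Sn (0, 1, 0) = T2 := by
  rw [Sn_def]; simp
lemma Sn_e3 : Sn (0, 0, 1) = T3 := by
  rw [Sn_def]; simp

end Stmt5Conc

end

/-- **A semigroup of three commuting CP maps on `B(H)` with no `*`-endomorphic dilation**
(settling a question of Bhat, 1998).  There exist a Hilbert space `H` and three pairwise
commuting contractions `T₁, T₂, T₃` such that the `cp`-semigroup
`Θ_n(a) = T₁^{n₁}T₂^{n₂}T₃^{n₃} a (T₃^{n₃})^*(T₂^{n₂})^*(T₁^{n₁})^*` over `ℕ³` admits no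
e-dilation `(K, u, α)` by a semigroup of normal `*`-endomorphisms of `B(K)`. -/
theorem stmt5 :
    ∃ (H : Type) (_ : NormedAddCommGroup H) (_ : InnerProductSpace ℂ H)
      (_ : CompleteSpace H) (T₁ T₂ T₃ : H →L[ℂ] H),
      ‖T₁‖ ≤ 1 ∧ ‖T₂‖ ≤ 1 ∧ ‖T₃‖ ≤ 1 ∧
      Commute T₁ T₂ ∧ Commute T₁ T₃ ∧ Commute T₂ T₃ ∧
      ¬ ∃ (K : Type u) (_ : NormedAddCommGroup K) (_ : InnerProductSpace ℂ K)
          (_ : CompleteSpace K) (u : H →ₗᵢ[ℂ] K)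
          (α : ℕ × ℕ × ℕ → (K →L[ℂ] K) → (K →L[ℂ] K)),
          (∀ (n : ℕ × ℕ × ℕ) (a b : K →L[ℂ] K), α n (a + b) = α n a + α n b) ∧
          (∀ (n : ℕ × ℕ × ℕ) (a b : K →L[ℂ] K), α n (a * b) = α n a * α n b) ∧
          (∀ (n : ℕ × ℕ × ℕ) (a : K →L[ℂ] K), α n (star a) = star (α n a)) ∧
          (∀ a : K →L[ℂ] K, α 0 a = a) ∧
          (∀ (m n : ℕ × ℕ × ℕ) (a : K →L[ℂ] K), α (m + n) a = α m (α n a)) ∧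
          (∀ (n : ℕ × ℕ × ℕ), ∀ (ι : Type u) [Preorder ι] [IsDirected ι (· ≤ ·)]
            [Nonempty ι], ∀ (f : ι → K →L[ℂ] K) (L : K →L[ℂ] K) (C : ℝ),
            (∀ j, ‖f j‖ ≤ C) →
            (∀ ξ η : K, Filter.Tendsto (fun j => ⟪(f j) ξ, η⟫_ℂ) Filter.atTop
              (nhds ⟪L ξ, η⟫_ℂ)) →
            (∀ ξ η : K, Filter.Tendsto (fun j => ⟪(α n (f j)) ξ, η⟫_ℂ) Filter.atTop
              (nhds ⟪(α n L) ξ, η⟫_ℂ))) ∧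
          (∀ (n : ℕ × ℕ × ℕ) (a : K →L[ℂ] K),
            (T₁ ^ n.1 * T₂ ^ n.2.1 * T₃ ^ n.2.2) *
                ((ContinuousLinearMap.adjoint u.toContinuousLinearMap).comp
                  (a.comp u.toContinuousLinearMap)) *
                star (T₁ ^ n.1 * T₂ ^ n.2.1 * T₃ ^ n.2.2) =
              (ContinuousLinearMap.adjoint u.toContinuousLinearMap).comp
                ((α n a).comp u.toContinuousLinearMap)) := by
  classical
  refine ⟨Stmt5Conc.Hc, inferInstance, inferInstance, inferInstance,
    Stmt5Conc.T1, Stmt5Conc.T2, Stmt5Conc.T3,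
    Stmt5Conc.norm_T1_le, Stmt5Conc.norm_T2_le, Stmt5Conc.norm_T3_le,
    Stmt5Conc.commute_T1_T2, Stmt5Conc.commute_T1_T3, Stmt5Conc.commute_T2_T3, ?_⟩
  rintro ⟨K, iN, iI, iC, u, α, hAdd, hMul, hStar, hId, hSemi, hNorm, hCov⟩
  letI := iN
  letI := iI
  letI := iC
  open Stmt5Conc in
  -- existence of the canonical intertwining isometries
  have hcov' : ∀ (n : ℕ × ℕ × ℕ) (a : K →L[ℂ] K),
      Sn n * ((ContinuousLinearMap.adjoint u.toContinuousLinearMap).comp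
        (a.comp u.toContinuousLinearMap)) * star (Sn n) =
      (ContinuousLinearMap.adjoint u.toContinuousLinearMap).comp
        ((α n a).comp u.toContinuousLinearMap) := by
    intro n a
    rw [Sn_def]
    exact hCov n a
  have hex : ∀ n : ℕ × ℕ × ℕ, ∃ V, Stmt5Aux.props u (α n) (Sn n) V := by
    intro n
    exact Stmt5Aux.exists_V u (α n) (Sn n) (hMul n) (hStar n) (hAdd n) (hcov' n)
      E4 (Sn_star_ne n)
  choose 𝒱 hV using hex
  have huniq : ∀ (n : ℕ × ℕ × ℕ) (t : K →L[ℂ] K),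
      Stmt5Aux.props u (α n) (Sn n) t → t = 𝒱 n := by
    intro n t ht
    exact Stmt5Aux.props_unique u (α n) (Sn n) (hMul n) (hStar n) (hcov' n)
      E4 E4 (Sn_star_ne n) norm_E4 (𝒱 n) t (hV n) ht
  have hVmul : ∀ m n : ℕ × ℕ × ℕ, 𝒱 m * 𝒱 n = 𝒱 (m + n) := by
    intro m n
    apply huniq (m + n)
    exact Stmt5Aux.props_comp u (α m) (α n) (α (m + n)) (Sn m) (Sn n) (Sn (m + n))
      (𝒱 m) (𝒱 n) (hV m) (hV n) (fun a => hSemi m n a) (Sn_mul m n)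
  have hVcomm : ∀ m n : ℕ × ℕ × ℕ, 𝒱 m * 𝒱 n = 𝒱 n * 𝒱 m := by
    intro m n
    rw [hVmul m n, hVmul n m, add_comm]
  have fwd : ∀ (n : ℕ × ℕ × ℕ) (h : Hc), ‖Sn n h‖ = ‖h‖ → 𝒱 n (u h) = u (Sn n h) :=
    fun n h hh => Stmt5Aux.props_forward u (α n) (Sn n) (𝒱 n) (hV n) h hh
  -- the five elementary moves
  have s3 : 𝒱 (0, 0, 1) (u vh10) = u vk01 := by
    have h := fwd (0, 0, 1) vh10 (by rw [Sn_e3, T3_vh10, norm_vk01, norm_vh10])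
    rwa [Sn_e3, T3_vh10] at h
  have s1a : 𝒱 (1, 0, 0) (u vh01) = u vk01 := by
    have h := fwd (1, 0, 0) vh01 (by rw [Sn_e1, T1_vh01, norm_vk01, norm_vh01])
    rwa [Sn_e1, T1_vh01] at h
  have s2a : 𝒱 (0, 1, 0) (u vh01) = u vk0m1 := by
    have h := fwd (0, 1, 0) vh01 (by rw [Sn_e2, T2_vh01, norm_vk0m1, norm_vh01])
    rwa [Sn_e2, T2_vh01] at h
  have s2b : 𝒱 (0, 1, 0) (u vh10) = u vk10 := by
    have h := fwd (0, 1, 0) vh10 (by rw [Sn_e2, T2_vh10, norm_vk10, norm_vh10])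
    rwa [Sn_e2, T2_vh10] at h
  have s1b : 𝒱 (1, 0, 0) (u vh10) = u vk10 := by
    have h := fwd (1, 0, 0) vh10 (by rw [Sn_e1, T1_vh10, norm_vk10, norm_vh10])
    rwa [Sn_e1, T1_vh10] at h
  -- the two chains
  have chainA : 𝒱 (0, 1, 0) (𝒱 (0, 0, 1) (u vh10)) = 𝒱 (1, 0, 0) (u vk0m1) := by
    rw [s3, ← s1a, ← ContinuousLinearMap.mul_apply, hVcomm (0, 1, 0) (1, 0, 0),
      ContinuousLinearMap.mul_apply, s2a]
  have chainB : 𝒱 (0, 0, 1) (𝒱 (0, 1, 0) (u vh10)) = 𝒱 (1, 0, 0) (u vk01) := by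
    rw [s2b, ← s1b, ← ContinuousLinearMap.mul_apply, hVcomm (0, 0, 1) (1, 0, 0),
      ContinuousLinearMap.mul_apply, s3]
  have hEq : 𝒱 (1, 0, 0) (u vk0m1) = 𝒱 (1, 0, 0) (u vk01) := by
    rw [← chainA, ← chainB, ← ContinuousLinearMap.mul_apply (𝒱 (0, 1, 0)),
      ← ContinuousLinearMap.mul_apply (𝒱 (0, 0, 1)), hVcomm]
  have hinj := Stmt5Aux.props_injective u (α (1, 0, 0)) (Sn (1, 0, 0)) (𝒱 (1, 0, 0))
    (hV (1, 0, 0)) hEq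
  have := u.injective hinj
  exact vk01_ne_vk0m1 this.symm
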